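/- arXiv:0806.3188 — 3 statements merged into one kernel-verified Lean document; each statement's English description precedes it below -/
import Mathlib

section
/- Let u₁, u₂ ∈ [0,1) and θ ∈ [0,1) with u₁ + u₂ - θ u₁ u₂ < 1. Writing 1/(1 - u₁ - u₂ + θ u₁ u₂) = ∑_{j,k≥0} D_{j,k} u₁^j u₂^k as a double power series, for all 0 ≤ j ≤ k one has D_{j,k} = ∑_{p=0}^{j} (1-θ)^p C(j,p) C(k,p). -/
open Finset

set_option maxHeartbeats 1000000

private lemma hasSum_congr {ι : Type*} {f g : ι → ℝ} {a : ℝ} (h : HasSum f a)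
    (he : ∀ i, f i = g i) : HasSum g a := (funext he : f = g) ▸ h

/-- If a power series sums to `0` for every `x ∈ (0, ε)`, its constant coefficient is `0`. -/
lemma coeff_zero_eq_zero {d : ℕ → ℝ} {ε : ℝ} (hε : 0 < ε)
    (h : ∀ x : ℝ, 0 < x → x < ε → HasSum (fun n => d n * x ^ n) 0) : d 0 = 0 := by
  set x0 : ℝ := ε / 2 with hx0def
  have hx0 : 0 < x0 := by positivity
  have hx0ε : x0 < ε := by rw [hx0def]; linarith
  have hsum0 := h x0 hx0 hx0ε
  have habs : Summable (fun n => |d (n + 1) * x0 ^ (n + 1)|) := by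
    have h1 : Summable (fun n => |d n * x0 ^ n|) :=
      summable_abs_iff.mpr hsum0.summable
    exact (summable_nat_add_iff 1).mpr h1
  set C : ℝ := ∑' n, |d (n + 1) * x0 ^ (n + 1)| with hCdef
  have hC : 0 ≤ C := tsum_nonneg fun n => abs_nonneg _
  have key : ∀ x : ℝ, 0 < x → x < x0 → |d 0| ≤ (x / x0) * C := by
    intro x hx hxlt
    have hx1 : x < ε := lt_trans hxlt hx0ε
    have htail : HasSum (fun n => d (n + 1) * x ^ (n + 1)) (-(d 0)) := by
      refine (hasSum_nat_add_iff (f := fun n => d n * x ^ n) 1).mpr ?_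
      simpa using h x hx hx1
    have hbound : ∀ n, ‖d (n + 1) * x ^ (n + 1)‖ ≤ (x / x0) * |d (n + 1) * x0 ^ (n + 1)| := by
      intro n
      rw [Real.norm_eq_abs, abs_mul, abs_mul]
      have hxp : |x ^ (n + 1)| = x ^ (n + 1) := abs_of_nonneg (by positivity)
      have hx0p : |x0 ^ (n + 1)| = x0 ^ (n + 1) := abs_of_nonneg (by positivity)
      rw [hxp, hx0p]
      have hpow : x ^ (n + 1) ≤ (x / x0) * x0 ^ (n + 1) := by
        have hb : x ^ n ≤ x0 ^ n := pow_le_pow_left₀ hx.le hxlt.le n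
        have : (x / x0) * x0 ^ (n + 1) = x * x0 ^ n := by
          field_simp
          ring
        rw [this, pow_succ, mul_comm (x ^ n) x]
        exact mul_le_mul_of_nonneg_left hb hx.le
      calc |d (n + 1)| * x ^ (n + 1) ≤ |d (n + 1)| * ((x / x0) * x0 ^ (n + 1)) :=
            mul_le_mul_of_nonneg_left hpow (abs_nonneg _)
        _ = (x / x0) * (|d (n + 1)| * x0 ^ (n + 1)) := by ring
    have hsummC : Summable (fun n => (x / x0) * |d (n + 1) * x0 ^ (n + 1)|) :=
      habs.mul_left _
    have hsumx : Summable fun n => ‖d (n + 1) * x ^ (n + 1)‖ :=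
      Summable.of_nonneg_of_le (fun n => norm_nonneg _) hbound hsummC
    calc |d 0| = ‖-(d 0)‖ := by rw [norm_neg]; rfl
      _ = ‖∑' n, d (n + 1) * x ^ (n + 1)‖ := by rw [htail.tsum_eq]
      _ ≤ ∑' n, ‖d (n + 1) * x ^ (n + 1)‖ := norm_tsum_le_tsum_norm hsumx
      _ ≤ ∑' n, (x / x0) * |d (n + 1) * x0 ^ (n + 1)| :=
          Summable.tsum_le_tsum hbound hsumx hsummC
      _ = (x / x0) * C := by rw [tsum_mul_left]
  by_contra hd0
  have hdpos : 0 < |d 0| := abs_pos.mpr hd0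
  set x : ℝ := min (x0 / 2) (|d 0| * x0 / (2 * (C + 1))) with hxdef
  have hxpos : 0 < x := lt_min (by positivity) (by positivity)
  have hxlt : x < x0 := lt_of_le_of_lt (min_le_left _ _) (by linarith)
  have hxle : x ≤ |d 0| * x0 / (2 * (C + 1)) := min_le_right _ _
  have hk := key x hxpos hxlt
  -- |d 0| ≤ (x / x0) * C ≤ |d 0| * C / (2 (C+1)) < |d 0|
  have h1 : |d 0| * x0 ≤ x * C := by
    calc |d 0| * x0 ≤ ((x / x0) * C) * x0 := mul_le_mul_of_nonneg_right hk hx0.le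
      _ = x * C := by field_simp
  have h2 : x * (2 * (C + 1)) ≤ |d 0| * x0 := by
    have := mul_le_mul_of_nonneg_right hxle (by positivity : (0:ℝ) ≤ 2 * (C + 1))
    calc x * (2 * (C + 1)) ≤ |d 0| * x0 / (2 * (C + 1)) * (2 * (C + 1)) := this
      _ = |d 0| * x0 := by field_simp
  nlinarith [mul_pos hxpos (by linarith : (0:ℝ) < C + 2)]

/-- If a power series sums to `0` for every `x ∈ (0, ε)`, all its coefficients are `0`. -/
lemma coeff_eq_zero {ε : ℝ} (hε : 0 < ε) :
    ∀ d : ℕ → ℝ, (∀ x : ℝ, 0 < x → x < ε → HasSum (fun n => d n * x ^ n) 0) →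
      ∀ n, d n = 0 := by
  intro d h n
  induction n generalizing d with
  | zero => exact coeff_zero_eq_zero hε h
  | succ n ih =>
    refine ih (fun m => d (m + 1)) ?_ 
    intro x hx hx'
    have h0 : d 0 = 0 := coeff_zero_eq_zero hε h
    have htail : HasSum (fun m => d (m + 1) * x ^ (m + 1)) (0 * x) := by
      rw [zero_mul]
      refine (hasSum_nat_add_iff (f := fun n => d n * x ^ n) 1).mpr ?_
      simpa [h0] using h x hx hx'
    have h2 : HasSum (fun m => d (m + 1) * x ^ m * x) (0 * x) := by
      simpa [pow_succ, mul_assoc] using htail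
    exact (hasSum_mul_right_iff hx.ne').mp h2

/-- Two-variable version: if a double power series sums to `0` on `(0,ε)²`,
all its coefficients vanish. -/
lemma coeff2_eq_zero {ε : ℝ} (hε : 0 < ε) (c : ℕ → ℕ → ℝ)
    (h : ∀ u₁ u₂ : ℝ, 0 < u₁ → u₁ < ε → 0 < u₂ → u₂ < ε →
      HasSum (fun jk : ℕ × ℕ => c jk.1 jk.2 * u₁ ^ jk.1 * u₂ ^ jk.2) 0) :
    ∀ j k, c j k = 0 := by
  have key : ∀ u₂ : ℝ, 0 < u₂ → u₂ < ε → ∀ j, HasSum (fun k => c j k * u₂ ^ k) 0 := by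
    intro u₂ hu₂ hu₂'
    have hfib : ∀ u₁ : ℝ, 0 < u₁ → u₁ < ε → ∀ j,
        Summable (fun k => c j k * u₂ ^ k) := by
      intro u₁ hu₁ hu₁' j
      have hs := (h u₁ u₂ hu₁ hu₁' hu₂ hu₂').summable
      have hsj : Summable (fun k => c j k * u₁ ^ j * u₂ ^ k) := hs.prod_factor j
      have := hsj.mul_right ((u₁ ^ j)⁻¹)
      have hne : (u₁ : ℝ) ^ j ≠ 0 := by positivity
      refine this.congr fun k => ?_
      field_simp
    have hhalf : 0 < ε / 2 := by positivity
    have hhalf' : ε / 2 < ε := by linarith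
    have hAzero : ∀ j, (∑' k, c j k * u₂ ^ k) = 0 := by
      refine coeff_eq_zero hε (fun j => ∑' k, c j k * u₂ ^ k) ?_
      intro u₁ hu₁ hu₁'
      have hsum := h u₁ u₂ hu₁ hu₁' hu₂ hu₂'
      refine hsum.prod_fiberwise fun j => ?_
      have hf := (hfib u₁ hu₁ hu₁' j).hasSum
      have := hf.mul_right (u₁ ^ j)
      exact hasSum_congr this fun k => by ring
    intro j
    have := (hfib (ε / 2) hhalf hhalf' j).hasSum
    rwa [hAzero j] at this
  intro j k
  refine coeff_eq_zero hε (fun k => c j k) ?_ k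
  intro u₂ hu₂ hu₂'
  exact key u₂ hu₂ hu₂' j

/-- Binomial expansion of `u^p / (1-u)^(p+1)`. -/
lemma hasSum_choose_pow {u : ℝ} (p : ℕ) (h0 : 0 ≤ u) (h1 : u < 1) :
    HasSum (fun j => (j.choose p : ℝ) * u ^ j) (u ^ p / (1 - u) ^ (p + 1)) := by
  have hn : ‖u‖ < 1 := by rwa [Real.norm_eq_abs, abs_of_nonneg h0]
  have H := (hasSum_choose_mul_geometric_of_norm_lt_one p hn).mul_right (u ^ p)
  rw [← hasSum_nat_add_iff' p]
  have hz : ∀ i ∈ Finset.range p, ((i.choose p : ℝ)) * u ^ i = 0 := by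
    intro i hi
    simp [Nat.choose_eq_zero_of_lt (Finset.mem_range.mp hi)]
  rw [Finset.sum_eq_zero hz, sub_zero]
  have hterm : (fun n : ℕ => (((n + p).choose p : ℕ) : ℝ) * u ^ (n + p)) =
      fun n : ℕ => (((n + p).choose p : ℕ) : ℝ) * u ^ n * u ^ p := by
    funext n; rw [pow_add, mul_assoc]
  rw [hterm, show u ^ p / (1 - u) ^ (p + 1) = 1 / (1 - u) ^ (p + 1) * u ^ p by ring]
  exact H

private lemma term_aux (c x y a b : ℝ) (ha : a ≠ 0) (hb : b ≠ 0) (p : ℕ) :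
    (c * (x * y) / (a * b)) ^ p * (a * b)⁻¹ =
      c ^ p * (x ^ p / a ^ (p + 1) * (y ^ p / b ^ (p + 1))) := by
  rw [div_pow, mul_pow, mul_pow, mul_pow, div_eq_mul_inv, div_eq_mul_inv, div_eq_mul_inv,
    mul_inv, mul_inv, pow_succ, pow_succ, mul_inv, mul_inv]
  ring

/-- The candidate coefficients. -/
noncomputable def Ecoef (θ : ℝ) (j k : ℕ) : ℝ :=
  ∑ p ∈ Finset.range (j + 1), (1 - θ) ^ p * (j.choose p : ℝ) * (k.choose p : ℝ)

lemma hasSum_Ecoef (θ : ℝ) (hθ : 0 ≤ θ) (hθ' : θ < 1) {u₁ u₂ : ℝ}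
    (h1 : 0 ≤ u₁) (h1' : u₁ < 1 / 2) (h2 : 0 ≤ u₂) (h2' : u₂ < 1 / 2) :
    HasSum (fun jk : ℕ × ℕ => Ecoef θ jk.1 jk.2 * u₁ ^ jk.1 * u₂ ^ jk.2)
      (1 / (1 - u₁ - u₂ + θ * u₁ * u₂)) := by
  have hu₁1 : u₁ < 1 := by linarith
  have hu₂1 : u₂ < 1 := by linarith
  have hd1 : (0:ℝ) < 1 - u₁ := by linarith
  have hd2 : (0:ℝ) < 1 - u₂ := by linarith
  have hθ1 : 0 ≤ 1 - θ := by linarith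
  have hθ1' : 1 - θ ≤ 1 := by linarith
  set denom : ℝ := 1 - u₁ - u₂ + θ * u₁ * u₂ with hdenomdef
  have hdeq : denom = (1 - u₁) * (1 - u₂) - (1 - θ) * (u₁ * u₂) := by
    rw [hdenomdef]; ring
  have hdenom : 0 < denom := by
    rw [hdeq]
    nlinarith [mul_nonneg (mul_nonneg hθ h1) h2, mul_nonneg h1 h2]
  set t : ℝ := (1 - θ) * (u₁ * u₂) / ((1 - u₁) * (1 - u₂)) with htdef
  have ht0 : 0 ≤ t := by positivity
  have ht1 : t < 1 := by
    rw [htdef, div_lt_one (by positivity)]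
    nlinarith [mul_nonneg (mul_nonneg hθ h1) h2, mul_nonneg h1 h2]
  -- geometric step
  have hgeo : HasSum (fun p : ℕ => t ^ p) (1 - t)⁻¹ := hasSum_geometric_of_lt_one ht0 ht1
  set S : ℕ → ℝ := fun p =>
    (1 - θ) ^ p * (u₁ ^ p / (1 - u₁) ^ (p + 1) * (u₂ ^ p / (1 - u₂) ^ (p + 1))) with hSdef
  have hS : HasSum S (1 / denom) := by
    have hgm := hgeo.mul_right (((1 - u₁) * (1 - u₂))⁻¹)
    have hval : (1 - t)⁻¹ * ((1 - u₁) * (1 - u₂))⁻¹ = 1 / denom := by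
      rw [← mul_inv, one_div]
      congr 1
      rw [hdeq, htdef]
      field_simp
    rw [hval] at hgm
    refine hasSum_congr hgm fun p => ?_
    rw [hSdef, htdef]
    exact term_aux _ _ _ _ _ hd1.ne' hd2.ne' p
  -- the triple-indexed family
  set G : ℕ × (ℕ × ℕ) → ℝ := fun x =>
    (1 - θ) ^ x.1 * ((x.2.1.choose x.1 : ℝ) * u₁ ^ x.2.1) *
      ((x.2.2.choose x.1 : ℝ) * u₂ ^ x.2.2) with hGdef
  have hGnonneg : ∀ x, 0 ≤ G x := by
    intro x; rw [hGdef]; positivity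
  have hfiber : ∀ p : ℕ, HasSum (fun jk : ℕ × ℕ => G (p, jk)) (S p) := by
    intro p
    have hB1 := hasSum_choose_pow p h1 hu₁1
    have hB2 := hasSum_choose_pow p h2 hu₂1
    have hsummable : Summable fun jk : ℕ × ℕ =>
        ((jk.1.choose p : ℝ) * u₁ ^ jk.1) * ((jk.2.choose p : ℝ) * u₂ ^ jk.2) :=
      hB1.summable.mul_of_nonneg hB2.summable
        (fun j => by positivity) (fun k => by positivity)
    have hmul := (hB1.mul hB2 hsummable).mul_left ((1 - θ) ^ p)
    rw [hSdef]
    refine hasSum_congr hmul fun jk => ?_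
    rw [hGdef]
    ring
  have hfibsummable : ∀ p, Summable fun jk : ℕ × ℕ => G (p, jk) := fun p =>
    (hfiber p).summable
  have hsummG : Summable G := by
    refine (summable_prod_of_nonneg hGnonneg).mpr ⟨hfibsummable, ?_⟩
    refine hS.summable.congr fun p => ?_
    exact ((hfiber p).tsum_eq).symm
  have htot : HasSum G (1 / denom) := by
    have hG := hsummG.hasSum
    have heq : ∑' x, G x = 1 / denom := by
      rw [Summable.tsum_prod' hsummG hfibsummable]
      calc (∑' p, ∑' jk : ℕ × ℕ, G (p, jk)) = ∑' p, S p := by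
            congr 1; funext p; exact (hfiber p).tsum_eq
        _ = 1 / denom := hS.tsum_eq
    rwa [heq] at hG
  -- regroup over (j,k)
  have hswap : HasSum (fun x : (ℕ × ℕ) × ℕ => G (x.2, x.1)) (1 / denom) := by
    have := (Equiv.prodComm (ℕ × ℕ) ℕ).hasSum_iff.mpr htot
    exact this
  refine hswap.prod_fiberwise fun jk => ?_
  -- fiber over (j,k): a finite sum
  have hz : ∀ p ∉ Finset.range (jk.1 + 1), G (p, jk) = 0 := by
    intro p hp
    rw [Finset.mem_range, not_lt] at hp
    have : jk.1.choose p = 0 := Nat.choose_eq_zero_of_lt (by omega)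
    rw [hGdef]; simp [this]
  have hfin := hasSum_sum_of_ne_finset_zero (L := SummationFilter.unconditional ℕ) hz
  have hsumeq : (∑ p ∈ Finset.range (jk.1 + 1), G (p, jk)) =
      Ecoef θ jk.1 jk.2 * u₁ ^ jk.1 * u₂ ^ jk.2 := by
    rw [Ecoef, Finset.sum_mul, Finset.sum_mul]
    refine Finset.sum_congr rfl fun p _ => ?_
    rw [hGdef]; ring
  rwa [hsumeq] at hfin

theorem D_coefficients (θ : ℝ) (hθ : 0 ≤ θ) (hθ' : θ < 1) (D : ℕ → ℕ → ℝ)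
    (hD : ∀ u₁ u₂ : ℝ, 0 ≤ u₁ → u₁ < 1 → 0 ≤ u₂ → u₂ < 1 →
      u₁ + u₂ - θ * u₁ * u₂ < 1 →
      HasSum (fun jk : ℕ × ℕ => D jk.1 jk.2 * u₁ ^ jk.1 * u₂ ^ jk.2)
        (1 / (1 - u₁ - u₂ + θ * u₁ * u₂))) :
    ∀ j k : ℕ, j ≤ k →
      D j k = ∑ p ∈ Finset.range (j + 1),
        (1 - θ) ^ p * (j.choose p : ℝ) * (k.choose p : ℝ) := by
  have hzero : ∀ j k, D j k - Ecoef θ j k = 0 := by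
    refine coeff2_eq_zero (ε := 1 / 2) (by norm_num)
      (fun j k => D j k - Ecoef θ j k) ?_
    intro u₁ u₂ hu₁ hu₁' hu₂ hu₂'
    have h1 : 0 ≤ u₁ := hu₁.le
    have h2 : 0 ≤ u₂ := hu₂.le
    have hlt1 : u₁ < 1 := by linarith
    have hlt2 : u₂ < 1 := by linarith
    have hcond : u₁ + u₂ - θ * u₁ * u₂ < 1 := by
      nlinarith [mul_nonneg (mul_nonneg hθ h1) h2]
    have hDsum := hD u₁ u₂ h1 hlt1 h2 hlt2 hcond
    have hEsum := hasSum_Ecoef θ hθ hθ' h1 hu₁' h2 hu₂'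
    have := hDsum.sub hEsum
    rw [sub_self] at this
    exact hasSum_congr this fun jk => by ring
  intro j k _
  have := hzero j k
  have : D j k = Ecoef θ j k := by linarith
  rw [this, Ecoef]
end

section
/- Let u₁, u₂ ∈ [0,1) and θ ∈ [0,1) with u₁ + u₂ - θ u₁ u₂ < 1. Writing -log(1 - u₁ - u₂ + θ u₁ u₂) = ∑_{j,k≥0} C_{j,k} u₁^j u₂^k, one has C_{0,0}=0, C_{j,0}=1/j and C_{0,k}=1/k for j,k ≥ 1, and for 1 ≤ j ≤ k, C_{j,k} = ∑_{p=1}^{j} ((1-θ)^p / p) · C(j-1,p-1) · C(k-1,p-1). -/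
open Filter Finset

section AuxC

private lemma unique_aux (a : ℕ → ℝ) (r : ℝ) (hr : 0 < r)
    (h : ∀ u : ℝ, 0 ≤ u → u < r → HasSum (fun n => a n * u ^ n) 0) :
    ∀ n, a n = 0 := by
  set p := FormalMultilinearSeries.ofScalars ℝ a with hp
  have hap : ∀ (u : ℝ) (n : ℕ), (p n) (fun _ => u) = a n * u ^ n := by
    intro u n
    rw [hp, FormalMultilinearSeries.ofScalars_apply_eq]
    simp [smul_eq_mul]
  have hr2 : 0 ≤ r / 2 := by linarith
  have hs2 : Summable (fun n => |a n * (r / 2) ^ n|) :=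
    (h (r / 2) hr2 (by linarith)).summable.abs
  set r' : NNReal := ⟨r / 2, hr2⟩ with hr'
  have hrad : (r' : ENNReal) ≤ p.radius := by
    apply p.le_radius_of_summable_norm
    simp only [hp, FormalMultilinearSeries.ofScalars_norm, hr', NNReal.coe_mk,
      Real.norm_eq_abs]
    exact (by simpa [abs_mul, abs_pow, abs_of_nonneg hr2] using hs2 :
      Summable (fun n => |a n| * (r / 2) ^ n))
  have hradpos : 0 < p.radius := lt_of_lt_of_le (by
    simp only [ENNReal.coe_pos]
    rw [hr']
    exact mod_cast half_pos hr) hrad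
  have hball : HasFPowerSeriesOnBall p.sum p 0 p.radius :=
    p.hasFPowerSeriesOnBall hradpos
  have hzero : ∀ u : ℝ, 0 ≤ u → u < r → p.sum u = 0 := by
    intro u hu hu'
    have : HasSum (fun n => (p n) (fun _ => u)) 0 := by
      simpa only [hap] using h u hu hu'
    exact this.tsum_eq
  have hfreq : ∃ᶠ z in nhdsWithin (0:ℝ) {(0:ℝ)}ᶜ, p.sum z = 0 := by
    have hev : ∀ᶠ z in nhdsWithin (0:ℝ) (Set.Ioi 0), p.sum z = 0 := by
      filter_upwards [Ioo_mem_nhdsGT_of_mem (Set.mem_Ico.mpr ⟨le_refl _, hr⟩)] with z hz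
      exact hzero z hz.1.le hz.2
    exact hev.frequently.filter_mono
      (nhdsWithin_mono 0 (fun x hx => ne_of_gt hx))
  have hev0 : ∀ᶠ z in nhds (0:ℝ), p.sum z = 0 :=
    (hball.analyticAt.frequently_zero_iff_eventually_zero).mp hfreq
  have hpz : p = 0 := hball.hasFPowerSeriesAt.eq_zero_of_eventually hev0
  intro n
  have := hap 1 n
  rw [hpz] at this
  simpa using this.symm

private lemma unique_aux2 (a b : ℕ → ℝ) (r : ℝ) (hr : 0 < r) (f : ℝ → ℝ)
    (ha : ∀ u : ℝ, 0 ≤ u → u < r → HasSum (fun n => a n * u ^ n) (f u))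
    (hb : ∀ u : ℝ, 0 ≤ u → u < r → HasSum (fun n => b n * u ^ n) (f u)) :
    a = b := by
  funext n
  have := unique_aux (fun n => a n - b n) r hr (fun u hu hu' => by
    simpa [sub_mul] using (ha u hu hu').sub (hb u hu hu')) n
  linarith

private lemma hasSum_shift_choose (q : ℕ) (u : ℝ) (h0 : 0 ≤ u) (h1 : u < 1) :
    HasSum (fun k : ℕ => (if k = 0 then 0 else (((k - 1).choose q : ℕ) : ℝ)) * u ^ k)
      ((u / (1 - u)) ^ (q + 1)) := by
  have hu : ‖u‖ < 1 := by rwa [Real.norm_eq_abs, abs_of_nonneg h0]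
  have h1' : HasSum (fun m : ℕ => (((m + q).choose q : ℕ) : ℝ) * u ^ m)
      (1 / (1 - u) ^ (q + 1)) := hasSum_choose_mul_geometric_of_norm_lt_one q hu
  have h2 : HasSum (fun m : ℕ => u ^ (q+1) * ((((m + q).choose q : ℕ) : ℝ) * u ^ m))
      (u ^ (q+1) * (1 / (1 - u) ^ (q + 1))) := h1'.mul_left _
  set f : ℕ → ℝ := fun k => (if k = 0 then 0 else (((k - 1).choose q : ℕ) : ℝ)) * u ^ k with hf
  have h3 : ∀ m : ℕ, f (m + (q + 1)) = u ^ (q+1) * ((((m + q).choose q : ℕ) : ℝ) * u ^ m) := by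
    intro m
    have he : m + (q + 1) - 1 = m + q := by omega
    simp only [hf, he, if_neg (by omega : ¬ m + (q+1) = 0)]
    ring
  have h4 : HasSum (fun m => f (m + (q+1))) (u ^ (q+1) * (1 / (1 - u) ^ (q + 1))) := by
    simpa only [h3] using h2
  have h5 := (hasSum_nat_add_iff (q+1)).mp h4
  have h6 : ∑ i ∈ Finset.range (q + 1), f i = 0 := by
    apply Finset.sum_eq_zero
    intro i hi
    rcases Nat.eq_zero_or_pos i with h | h
    · simp [hf, h]
    · simp only [Finset.mem_range] at hi
      have : (i - 1).choose q = 0 := Nat.choose_eq_zero_of_lt (by omega)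
      simp [hf, if_neg (by omega : ¬ i = 0), this]
  rw [h6, add_zero] at h5
  have he : u ^ (q+1) * (1 / (1 - u) ^ (q + 1)) = (u / (1 - u)) ^ (q + 1) := by
    rw [div_pow]; ring
  rwa [he] at h5

private lemma hasSum_log_row (u : ℝ) (h0 : 0 ≤ u) (h1 : u < 1) :
    HasSum (fun k : ℕ => (if k = 0 then 0 else 1 / (k : ℝ)) * u ^ k) (-Real.log (1 - u)) := by
  have h := Real.hasSum_pow_div_log_of_abs_lt_one (x := u) (by rwa [abs_of_nonneg h0])
  set f : ℕ → ℝ := fun k => (if k = 0 then 0 else 1 / (k : ℝ)) * u ^ k with hf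
  have h2 : ∀ n : ℕ, f (n + 1) = u ^ (n+1) / ((n:ℝ)+1) := by
    intro n
    simp only [hf, if_neg (Nat.succ_ne_zero n)]
    push_cast
    ring
  have h3 : HasSum (fun n => f (n + 1)) (-Real.log (1 - u)) := by
    simpa only [h2] using h
  have h4 := (hasSum_nat_add_iff 1).mp h3
  simpa [hf] using h4

private lemma stage2 (θ : ℝ) (j : ℕ) (hj : 1 ≤ j) (u : ℝ) (h0 : 0 ≤ u) (h1 : u < 1) :
    HasSum (fun k : ℕ =>
      (if k = 0 then 1 / (j : ℝ) else
        ∑ p ∈ Finset.Icc 1 j, ((1 - θ) ^ p / p) * ((j - 1).choose (p - 1) : ℝ) *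
          ((k - 1).choose (p - 1) : ℝ)) * u ^ k)
      (((1 - θ * u) / (1 - u)) ^ j / j) := by
  have hu1 : (0:ℝ) < 1 - u := by linarith
  set v := u / (1 - u) with hv
  have hδ : HasSum (fun k : ℕ => if k = 0 then (1/(j:ℝ)) else 0) (1/(j:ℝ)) :=
    hasSum_ite_eq 0 _
  have hP : ∀ p ∈ Finset.Icc 1 j,
      HasSum (fun k : ℕ => ((1 - θ) ^ p / p) * ((j - 1).choose (p - 1) : ℝ) *
        ((if k = 0 then 0 else ((k - 1).choose (p - 1) : ℝ)) * u ^ k))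
      (((1 - θ) ^ p / p) * ((j - 1).choose (p - 1) : ℝ) * v ^ p) := by
    intro p hp
    simp only [Finset.mem_Icc] at hp
    have hq : p - 1 + 1 = p := by omega
    have h := hasSum_shift_choose (p - 1) u h0 h1
    rw [hq] at h
    exact h.mul_left _
  have hsum := hδ.add (hasSum_sum hP)
  have hfun : ∀ k : ℕ, ((if k = 0 then (1/(j:ℝ)) else 0) +
      ∑ p ∈ Finset.Icc 1 j, ((1 - θ) ^ p / p) * ((j - 1).choose (p - 1) : ℝ) *
        ((if k = 0 then 0 else ((k - 1).choose (p - 1) : ℝ)) * u ^ k)) =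
      (if k = 0 then 1 / (j : ℝ) else
        ∑ p ∈ Finset.Icc 1 j, ((1 - θ) ^ p / p) * ((j - 1).choose (p - 1) : ℝ) *
          ((k - 1).choose (p - 1) : ℝ)) * u ^ k := by
    intro k
    rcases eq_or_ne k 0 with rfl | hk
    · simp
    · simp only [if_neg hk, Finset.sum_mul, zero_add]
      exact Finset.sum_congr rfl (fun p _ => by ring)
  have hval : (1/(j:ℝ)) + ∑ p ∈ Finset.Icc 1 j,
      ((1 - θ) ^ p / p) * ((j - 1).choose (p - 1) : ℝ) * v ^ p
      = ((1 - θ * u) / (1 - u)) ^ j / j := by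
    have hc : (1 - θ * u) / (1 - u) = (1 - θ) * v + 1 := by
      rw [hv]
      field_simp
      ring
    rw [hc, add_pow]
    rw [Finset.sum_range_succ']
    have hIcc : ∀ (g : ℕ → ℝ), ∑ p ∈ Finset.Icc 1 j, g p = ∑ i ∈ Finset.range j, g (1 + i) := by
      intro g
      rw [← Finset.Ico_add_one_right_eq_Icc, Finset.sum_Ico_eq_sum_range, Nat.add_sub_cancel]
    rw [hIcc]
    have hj0 : (j:ℝ) ≠ 0 := by positivity
    simp only [pow_zero, one_mul, one_pow, Nat.choose_zero_right, Nat.cast_one, mul_one,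
      Nat.sub_zero]
    rw [add_div, add_comm]
    congr 1
    rw [Finset.sum_div]
    apply Finset.sum_congr rfl
    intro i _
    have hcast : (j:ℝ) * ((j - 1).choose i : ℝ) = ((j.choose (i+1)) : ℝ) * ((i:ℝ)+1) := by
      have hsm := Nat.add_one_mul_choose_eq (j - 1) i
      have hjs : j - 1 + 1 = j := by omega
      rw [hjs] at hsm
      exact_mod_cast congrArg (Nat.cast : ℕ → ℝ) hsm
    have hi1 : ((i:ℝ) + 1) ≠ 0 := by positivity
    have h1i : 1 + i = i + 1 := by omega
    rw [h1i]
    push_cast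
    rw [mul_pow]
    field_simp
    linear_combination ((1 - θ) ^ (i + 1) * v ^ (i + 1)) * hcast
  rw [hval] at hsum
  exact HasSum.congr_fun hsum (fun k => (hfun k).symm)

private lemma stage1 (θ : ℝ) (hθ0 : 0 ≤ θ) (hθ' : θ < 1) (u₂ : ℝ) (h₂0 : 0 ≤ u₂) (h₂1 : u₂ < 1)
    (u₁ : ℝ) (h₁0 : 0 ≤ u₁) (h₁r : u₁ < (1 - u₂) / (1 - θ * u₂)) :
    HasSum (fun j : ℕ => (if j = 0 then -Real.log (1 - u₂)
        else ((1 - θ * u₂) / (1 - u₂)) ^ j / j) * u₁ ^ j)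
      (-Real.log (1 - u₁ - u₂ + θ * u₁ * u₂)) := by
  have hd : (0:ℝ) < 1 - u₂ := by linarith
  have hn : (0:ℝ) < 1 - θ * u₂ := by nlinarith
  set c := (1 - θ * u₂) / (1 - u₂) with hcdef
  have hc0 : 0 < c := div_pos hn hd
  set x := u₁ * c with hxdef
  have hx0 : 0 ≤ x := mul_nonneg h₁0 hc0.le
  have hx1 : x < 1 := by
    have h₁r' : u₁ * (1 - θ * u₂) < 1 - u₂ := (lt_div_iff₀ hn).mp h₁r
    rw [hxdef, hcdef, ← mul_div_assoc, div_lt_one hd]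
    exact h₁r'
  have h := Real.hasSum_pow_div_log_of_abs_lt_one (x := x) (by rwa [abs_of_nonneg hx0])
  set f : ℕ → ℝ := fun j => (if j = 0 then -Real.log (1 - u₂)
      else c ^ j / j) * u₁ ^ j with hf
  have h2 : ∀ n : ℕ, f (n + 1) = x ^ (n + 1) / ((n:ℝ) + 1) := by
    intro n
    simp only [hf, if_neg (Nat.succ_ne_zero n), hxdef, mul_pow]
    push_cast
    ring
  have h3 : HasSum (fun n => f (n + 1)) (-Real.log (1 - x)) := by
    simpa only [h2] using h
  have h4 := (hasSum_nat_add_iff 1).mp h3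
  have h5 : ∑ i ∈ Finset.range 1, f i = -Real.log (1 - u₂) := by simp [hf]
  rw [h5] at h4
  have hval : -Real.log (1 - x) + -Real.log (1 - u₂) =
      -Real.log (1 - u₁ - u₂ + θ * u₁ * u₂) := by
    rw [← neg_add, ← Real.log_mul (by linarith) (by linarith)]
    congr 1
    rw [hxdef, hcdef]
    field_simp
    ring
  rwa [hval] at h4

end AuxC

theorem C_coefficients (θ : ℝ) (hθ : 0 ≤ θ) (hθ' : θ < 1) (C : ℕ → ℕ → ℝ)
    (hC : ∀ u₁ u₂ : ℝ, 0 ≤ u₁ → u₁ < 1 → 0 ≤ u₂ → u₂ < 1 →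
      u₁ + u₂ - θ * u₁ * u₂ < 1 →
      HasSum (fun jk : ℕ × ℕ => C jk.1 jk.2 * u₁ ^ jk.1 * u₂ ^ jk.2)
        (-Real.log (1 - u₁ - u₂ + θ * u₁ * u₂))) :
    C 0 0 = 0 ∧
    (∀ j : ℕ, 1 ≤ j → C j 0 = 1 / j) ∧
    (∀ k : ℕ, 1 ≤ k → C 0 k = 1 / k) ∧
    (∀ j k : ℕ, 1 ≤ j → j ≤ k →
      C j k = ∑ p ∈ Finset.Icc 1 j,
        ((1 - θ) ^ p / p) * ((j - 1).choose (p - 1) : ℝ) *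
          ((k - 1).choose (p - 1) : ℝ)) := by
  classical
  set E : ℝ → ℕ → ℝ := fun u j => if j = 0 then -Real.log (1 - u)
      else ((1 - θ * u) / (1 - u)) ^ j / j with hE
  set D : ℕ → ℕ → ℝ := fun j k =>
    if j = 0 then (if k = 0 then 0 else 1 / (k : ℝ))
    else (if k = 0 then 1 / (j : ℝ)
      else ∑ p ∈ Finset.Icc 1 j, ((1 - θ) ^ p / p) * ((j - 1).choose (p - 1) : ℝ) *
        ((k - 1).choose (p - 1) : ℝ)) with hD
  have stepA : ∀ u₂ : ℝ, 0 ≤ u₂ → u₂ < 1 → ∀ j : ℕ,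
      HasSum (fun k => C j k * u₂ ^ k) (E u₂ j) := by
    intro u₂ h20 h21
    have hd : (0:ℝ) < 1 - u₂ := by linarith
    have hn : (0:ℝ) < 1 - θ * u₂ := by nlinarith
    set r : ℝ := (1 - u₂) / (1 - θ * u₂) with hrdef
    have hr0 : 0 < r := div_pos hd hn
    have hr1 : r ≤ 1 := by
      rw [hrdef, div_le_one hn]
      nlinarith
    have hcon : ∀ u₁ : ℝ, 0 ≤ u₁ → u₁ < r → u₁ < 1 ∧ u₁ + u₂ - θ * u₁ * u₂ < 1 := by
      intro u₁ h10 h1r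
      have h1r' : u₁ * (1 - θ * u₂) < 1 - u₂ := (lt_div_iff₀ hn).mp (hrdef ▸ h1r)
      constructor
      · exact lt_of_lt_of_le h1r hr1
      · nlinarith
    have hrow : ∀ j : ℕ, Summable (fun k => C j k * u₂ ^ k) := by
      intro j
      have h10 : (0:ℝ) ≤ r / 2 := by linarith
      have hcr := hcon (r/2) h10 (by linarith)
      have hs := (hC (r/2) u₂ h10 hcr.1 h20 h21 hcr.2).summable.prod_factor j
      have hpow : ((r/2:ℝ) ^ j) ≠ 0 := by positivity
      have hm := hs.mul_left ((r/2 : ℝ) ^ j)⁻¹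
      apply hm.congr
      intro k
      field_simp
    have hAsum : ∀ u₁ : ℝ, 0 ≤ u₁ → u₁ < r →
        HasSum (fun j => (∑' k, C j k * u₂ ^ k) * u₁ ^ j)
          (-Real.log (1 - u₁ - u₂ + θ * u₁ * u₂)) := by
      intro u₁ h10 h1r
      obtain ⟨h11, hcc⟩ := hcon u₁ h10 h1r
      refine (hC u₁ u₂ h10 h11 h20 h21 hcc).prod_fiberwise ?_
      intro j
      have h := (hrow j).hasSum.mul_left (u₁ ^ j)
      have h' : HasSum (fun k => C j k * u₁ ^ j * u₂ ^ k)
          (u₁ ^ j * ∑' k, C j k * u₂ ^ k) :=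
        h.congr_fun (fun k => by ring)
      rw [mul_comm (u₁ ^ j)] at h'
      exact h'
    have hEq : (fun j => ∑' k, C j k * u₂ ^ k) = fun j => E u₂ j := by
      apply unique_aux2 _ _ r hr0 (fun u₁ => -Real.log (1 - u₁ - u₂ + θ * u₁ * u₂)) hAsum
      intro u₁ h10 h1r
      have := stage1 θ hθ hθ' u₂ h20 h21 u₁ h10 (hrdef ▸ h1r)
      simpa only [hE] using this
    intro j
    have hj := congrFun hEq j
    exact hj ▸ (hrow j).hasSum
  have stepB : ∀ (j : ℕ) (u : ℝ), 0 ≤ u → u < 1 →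
      HasSum (fun k => D j k * u ^ k) (E u j) := by
    intro j u h0 h1
    rcases Nat.eq_zero_or_pos j with rfl | hj
    · simpa only [hD, hE, if_pos rfl] using hasSum_log_row u h0 h1
    · have hj0 : j ≠ 0 := Nat.pos_iff_ne_zero.mp hj
      simpa only [hD, hE, if_neg hj0] using stage2 θ j hj u h0 h1
  have hCDjk : ∀ j k, C j k = D j k := by
    intro j k
    have hCD : (fun k => C j k) = fun k => D j k :=
      unique_aux2 _ _ 1 one_pos (fun u => E u j)
        (fun u h0 h1 => stepA u h0 h1 j) (fun u h0 h1 => stepB j u h0 h1)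
    exact congrFun hCD k
  refine ⟨?_, ?_, ?_, ?_⟩
  · simpa [hD] using hCDjk 0 0
  · intro j hj
    rw [hCDjk j 0]
    simp [hD, Nat.pos_iff_ne_zero.mp hj]
  · intro k hk
    rw [hCDjk 0 k]
    simp [hD, Nat.pos_iff_ne_zero.mp hk]
  · intro j k hj hk
    rw [hCDjk j k]
    simp [hD, Nat.pos_iff_ne_zero.mp hj, Nat.pos_iff_ne_zero.mp (le_trans hj hk)]
end

section
/- Let u₁, u₂ ∈ [0,1) and θ ∈ [0,1) with u₁ + u₂ - θ u₁ u₂ < 1. Then all coefficients C_{j,k} of the power series expansion of -log(1 - u₁ - u₂ + θ u₁ u₂) at the origin are nonnegative, except the constant term which is zero. -/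
open Filter Topology

lemma coeff_zero_1d (c : ℕ → ℝ) (r : ℝ) (hr : 0 < r)
    (h : ∀ x : ℝ, 0 ≤ x → x < r → HasSum (fun n => c n * x ^ n) 0) : ∀ n, c n = 0 := by
  obtain ⟨x0, hx0, hx0r⟩ : ∃ x0 : ℝ, 0 < x0 ∧ x0 < r := ⟨r / 2, by positivity, by linarith⟩
  have hs : Summable fun n => c n * x0 ^ n := (h x0 hx0.le hx0r).summable
  have habs : Summable fun n => |c n| * x0 ^ n := by
    have := (summable_abs_iff.2 hs)
    simpa [abs_mul, abs_pow, abs_of_nonneg hx0.le] using this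
  set M := ∑' n, |c n| * x0 ^ n with hMdef
  have hM : ∀ n, |c n| * x0 ^ n ≤ M := fun n =>
    Summable.le_tsum habs n fun m _ => by positivity
  have hMn : ∀ n, |c n| ≤ M / x0 ^ n := fun n => by
    rw [le_div_iff₀ (by positivity)]
    exact hM n
  intro n
  induction n using Nat.strong_induction_on with
  | _ n IH =>
  have key : ∀ x : ℝ, 0 < x → x < x0 → |c n| ≤ M / x0 ^ n * ((x / x0) * (1 - x / x0)⁻¹) := by
    intro x hx hxx0
    have hxr : x < r := hxx0.trans hx0r
    have h0 : HasSum (fun m => c (m + n) * x ^ (m + n)) 0 := by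
      have hz : ∑ i ∈ Finset.range n, c i * x ^ i = 0 :=
        Finset.sum_eq_zero fun i hi => by rw [IH i (Finset.mem_range.1 hi)]; ring
      have := (hasSum_nat_add_iff' (f := fun m => c m * x ^ m) n).2 (h x hx.le hxr)
      rw [hz, sub_zero] at this
      simpa using this
    have h1 : HasSum (fun m => c (m + n) * x ^ m) 0 := by
      refine (hasSum_mul_right_iff (pow_ne_zero n hx.ne')).1 ?_
      have he : (fun m => c (m + n) * x ^ m * x ^ n) = fun m => c (m + n) * x ^ (m + n) := by
        funext m; rw [pow_add]; ring
      rw [he, zero_mul]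
      exact h0
    have h2 : HasSum (fun m => c (m + 1 + n) * x ^ (m + 1)) (-(c n)) := by
      have := (hasSum_nat_add_iff' (f := fun m => c (m + n) * x ^ m) 1).2 h1
      simp only [Finset.range_one, Finset.sum_singleton, pow_zero, mul_one, zero_sub] at this
      simpa using this
    have ht : x / x0 < 1 := (div_lt_one hx0).2 hxx0
    have ht0 : 0 ≤ x / x0 := by positivity
    have hgeo : Summable fun m : ℕ => M / x0 ^ n * ((x / x0) ^ (m + 1)) := by
      apply Summable.mul_left
      exact ((summable_geometric_of_lt_one ht0 ht).mul_left (x / x0)).congr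
        (fun m => by rw [pow_succ]; ring)
    have hbound : ∀ m : ℕ, |c (m + 1 + n) * x ^ (m + 1)| ≤ M / x0 ^ n * ((x / x0) ^ (m + 1)) := by
      intro m
      rw [abs_mul, abs_pow, abs_of_nonneg hx.le]
      calc |c (m + 1 + n)| * x ^ (m + 1) ≤ M / x0 ^ (m + 1 + n) * x ^ (m + 1) := by
            gcongr; exact hMn _
        _ = M / x0 ^ n * ((x / x0) ^ (m + 1)) := by
            rw [pow_add, div_pow]
            have hx0n : (x0 : ℝ) ^ n ≠ 0 := pow_ne_zero _ hx0.ne'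
            have hx0m : (x0 : ℝ) ^ (m + 1) ≠ 0 := pow_ne_zero _ hx0.ne'
            field_simp
    have habs2 : Summable fun m => |c (m + 1 + n) * x ^ (m + 1)| :=
      Summable.of_nonneg_of_le (fun m => abs_nonneg _) hbound hgeo
    have : |c n| = |∑' m, c (m + 1 + n) * x ^ (m + 1)| := by
      rw [h2.tsum_eq, abs_neg]
    rw [this]
    have hnorm : Summable fun m => ‖c (m + 1 + n) * x ^ (m + 1)‖ := by
      exact habs2
    have habs3 := norm_tsum_le_tsum_norm hnorm
    simp only [Real.norm_eq_abs] at habs3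
    calc |∑' m, c (m + 1 + n) * x ^ (m + 1)| ≤ ∑' m, |c (m + 1 + n) * x ^ (m + 1)| := habs3
      _ ≤ ∑' m : ℕ, M / x0 ^ n * ((x / x0) ^ (m + 1)) := Summable.tsum_le_tsum hbound habs2 hgeo
      _ = M / x0 ^ n * ∑' m : ℕ, (x / x0) ^ (m + 1) := by rw [tsum_mul_left]
      _ = M / x0 ^ n * ((x / x0) * (1 - x / x0)⁻¹) := by
          congr 1
          have : (fun m : ℕ => (x / x0) ^ (m + 1)) = fun m : ℕ => (x / x0) * (x / x0) ^ m := by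
            funext m; rw [pow_succ]; ring
          rw [this, tsum_mul_left, tsum_geometric_of_lt_one ht0 ht]
  -- now take the limit x → 0⁺
  have hB : Tendsto (fun x : ℝ => M / x0 ^ n * ((x / x0) * (1 - x / x0)⁻¹)) (𝓝[>] 0) (𝓝 0) := by
    have hc : ContinuousAt (fun x : ℝ => M / x0 ^ n * ((x / x0) * (1 - x / x0)⁻¹)) 0 := by
      have h1 : (1 : ℝ) - 0 / x0 ≠ 0 := by simp
      fun_prop (disch := simp [h1])
    have := hc.tendsto
    simp only [zero_div, mul_zero, zero_mul, mul_zero] at this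
    exact this.mono_left nhdsWithin_le_nhds
  have hev : ∀ᶠ x in 𝓝[>] (0 : ℝ), |c n| ≤ M / x0 ^ n * ((x / x0) * (1 - x / x0)⁻¹) := by
    filter_upwards [Ioo_mem_nhdsGT_of_mem (by constructor <;> [rfl; exact hx0] : (0:ℝ) ∈ Set.Ico 0 x0)] with x hx
    exact key x hx.1 hx.2
  have : |c n| ≤ 0 := ge_of_tendsto hB hev
  exact abs_nonpos_iff.1 this

lemma coeff_zero_2d (c : ℕ → ℕ → ℝ) (r : ℝ) (hr : 0 < r)
    (h : ∀ u₁ u₂ : ℝ, 0 ≤ u₁ → u₁ < r → 0 ≤ u₂ → u₂ < r →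
      HasSum (fun jk : ℕ × ℕ => c jk.1 jk.2 * u₁ ^ jk.1 * u₂ ^ jk.2) 0) :
    ∀ j k, c j k = 0 := by
  have key : ∀ u₂ : ℝ, 0 ≤ u₂ → u₂ < r → ∀ j, (∑' k, c j k * u₂ ^ k) = 0 := by
    intro u₂ hu₂0 hu₂r
    refine coeff_zero_1d (fun j => ∑' k, c j k * u₂ ^ k) r hr (fun u₁ hu₁0 hu₁r => ?_)
    have hs := h u₁ u₂ hu₁0 hu₁r hu₂0 hu₂r
    have hfib : ∀ j, HasSum (fun k => c j k * u₁ ^ j * u₂ ^ k)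
        ((∑' k, c j k * u₂ ^ k) * u₁ ^ j) := by
      intro j
      have hsum : Summable fun k => c j k * u₁ ^ j * u₂ ^ k := hs.summable.prod_factor j
      have : (fun k => c j k * u₁ ^ j * u₂ ^ k) = fun k => c j k * u₂ ^ k * u₁ ^ j := by
        funext k; ring
      rw [this] at hsum ⊢
      rw [← tsum_mul_right]
      exact hsum.hasSum
    exact hs.prod_fiberwise hfib
  intro j
  refine coeff_zero_1d (c j) r hr (fun u₂ hu₂0 hu₂r => ?_)
  have hsum : Summable fun k => c j k * u₂ ^ k := by
    have hs := h (r / 2) u₂ (by positivity) (by linarith) hu₂0 hu₂r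
    have h2 : Summable fun k => c j k * (r / 2) ^ j * u₂ ^ k := hs.summable.prod_factor j
    have h3 := h2.mul_right ((r / 2) ^ j)⁻¹
    refine h3.congr fun k => ?_
    have : ((r : ℝ) / 2) ^ j ≠ 0 := pow_ne_zero _ (by positivity)
    field_simp
  have := key u₂ hu₂0 hu₂r j
  rw [← this]
  exact hsum.hasSum

noncomputable def Dcoef (θ : ℝ) : ℕ → ℕ → ℝ := fun j k =>
  if k = 0 then 1 / j
  else if j = 0 then 1 / k
  else ∑ n ∈ Finset.range (min j k),
    (1 - θ) ^ (n + 1) / (n + 1) * ((j - 1).choose n : ℝ) * ((k - 1).choose n : ℝ)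

lemma Dcoef_nonneg (θ : ℝ) (hθ' : θ < 1) (j k : ℕ) : 0 ≤ Dcoef θ j k := by
  unfold Dcoef
  split
  · positivity
  split
  · positivity
  refine Finset.sum_nonneg fun n _ => ?_
  have h1 : (0:ℝ) ≤ 1 - θ := by linarith
  positivity

lemma Dcoef_zero (θ : ℝ) : Dcoef θ 0 0 = 0 := by simp [Dcoef]

lemma hasSum_log_aux {x : ℝ} (h0 : 0 ≤ x) (h1 : x < 1) :
    HasSum (fun n : ℕ => x ^ n / n) (-Real.log (1 - x)) := by
  have habs : |x| < 1 := by rw [abs_of_nonneg h0]; exact h1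
  have := Real.hasSum_pow_div_log_of_abs_lt_one habs
  have h2 := (hasSum_nat_add_iff' (f := fun n : ℕ => x ^ n / n) (g := -Real.log (1 - x)) 1).1 ?_
  · exact h2
  · simp only [Finset.range_one, Finset.sum_singleton, pow_zero, Nat.cast_zero, div_zero,
      sub_zero]
    exact this.congr fun n => by push_cast; ring

set_option maxHeartbeats 2000000 in
lemma hasSum_D (θ : ℝ) (hθ : 0 ≤ θ) (hθ' : θ < 1) (u₁ u₂ : ℝ)
    (h10 : 0 ≤ u₁) (h11 : u₁ < 1/2) (h20 : 0 ≤ u₂) (h21 : u₂ < 1/2) :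
    HasSum (fun jk : ℕ × ℕ => Dcoef θ jk.1 jk.2 * u₁ ^ jk.1 * u₂ ^ jk.2)
      (-Real.log (1 - u₁ - u₂ + θ * u₁ * u₂)) := by
  set ρ : ℝ := 1 - θ with hρdef
  have hρ0 : 0 < ρ := by simp [hρdef]; linarith
  have hρ1 : ρ ≤ 1 := by simp [hρdef]; linarith
  have hd1 : (0:ℝ) < 1 - u₁ := by linarith
  have hd2 : (0:ℝ) < 1 - u₂ := by linarith
  set w : ℝ := u₁ * u₂ / ((1 - u₁) * (1 - u₂)) with hwdef
  have hw0 : 0 ≤ w := by positivity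
  have hw1 : w < 1 := by
    rw [hwdef, div_lt_one (by positivity)]
    nlinarith
  have hρw0 : 0 ≤ ρ * w := by positivity
  have hρw1 : ρ * w < 1 := lt_of_le_of_lt (by nlinarith) hw1
  have habs1 : ‖u₁‖ < 1 := by rw [Real.norm_eq_abs, abs_of_nonneg h10]; linarith
  have habs2 : ‖u₂‖ < 1 := by rw [Real.norm_eq_abs, abs_of_nonneg h20]; linarith
  -- the interior triple family
  set T : ℕ × (ℕ × ℕ) → ℝ := fun p =>
    ρ ^ (p.1 + 1) / (p.1 + 1) * (p.2.1.choose p.1 : ℝ) * (p.2.2.choose p.1 : ℝ)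
      * u₁ ^ (p.2.1 + 1) * u₂ ^ (p.2.2 + 1) with hTdef
  have hTnonneg : ∀ p, 0 ≤ T p := fun p => by
    simp only [hTdef]; positivity
  -- fiberwise sums over n
  have fib : ∀ n : ℕ, HasSum (fun jk : ℕ × ℕ => T (n, jk)) ((ρ * w) ^ (n + 1) / (n + 1)) := by
    intro n
    have hb1 : HasSum (fun m : ℕ => ((m + n).choose n : ℝ) * u₁ ^ m) (1 / (1 - u₁) ^ (n + 1)) :=
      hasSum_choose_mul_geometric_of_norm_lt_one n habs1
    have hb2 : HasSum (fun m : ℕ => ((m + n).choose n : ℝ) * u₂ ^ m) (1 / (1 - u₂) ^ (n + 1)) :=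
      hasSum_choose_mul_geometric_of_norm_lt_one n habs2
    have hsum2 : Summable (fun q : ℕ × ℕ =>
        (((q.1 + n).choose n : ℝ) * u₁ ^ q.1) * (((q.2 + n).choose n : ℝ) * u₂ ^ q.2)) :=
      hb1.summable.mul_of_nonneg hb2.summable (fun m => by positivity) (fun m => by positivity)
    have hval := hb1.mul_eq hb2 hsum2.hasSum
    have hprod : HasSum (fun q : ℕ × ℕ =>
        (((q.1 + n).choose n : ℝ) * u₁ ^ q.1) * (((q.2 + n).choose n : ℝ) * u₂ ^ q.2))
        (1 / (1 - u₁) ^ (n + 1) * (1 / (1 - u₂) ^ (n + 1))) := by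
      rw [hval]; exact hsum2.hasSum
    have hmul := hprod.mul_left (ρ ^ (n + 1) / (n + 1) * u₁ ^ (n + 1) * u₂ ^ (n + 1))
    have hinj : Function.Injective (fun q : ℕ × ℕ => (q.1 + n, q.2 + n) : ℕ × ℕ → ℕ × ℕ) := by
      intro a b hab
      simp only [Prod.ext_iff] at hab ⊢
      omega
    have hvan : ∀ jk : ℕ × ℕ, jk ∉ Set.range (fun q : ℕ × ℕ => ((q.1 + n, q.2 + n) : ℕ × ℕ)) →
        T (n, jk) = 0 := by
      intro jk hjk
      have : jk.1 < n ∨ jk.2 < n := by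
        by_contra hcon
        push_neg at hcon
        exact hjk ⟨(jk.1 - n, jk.2 - n), by simp only [Prod.ext_iff]; omega⟩
      rcases this with hlt | hlt
      · simp [hTdef, Nat.choose_eq_zero_of_lt hlt]
      · simp [hTdef, Nat.choose_eq_zero_of_lt hlt]
    refine (hinj.hasSum_iff hvan).1 ?_
    have heq : ((fun jk : ℕ × ℕ => T (n, jk)) ∘ fun q : ℕ × ℕ => (q.1 + n, q.2 + n)) =
        fun q : ℕ × ℕ => ρ ^ (n + 1) / (n + 1) * u₁ ^ (n + 1) * u₂ ^ (n + 1) *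
          ((((q.1 + n).choose n : ℝ) * u₁ ^ q.1) * (((q.2 + n).choose n : ℝ) * u₂ ^ q.2)) := by
      funext q
      simp only [Function.comp, hTdef]
      ring
    rw [heq]
    convert hmul using 1
    · rfl
    have key : ρ * w = ρ * u₁ * u₂ * ((1 - u₁)⁻¹ * (1 - u₂)⁻¹) := by
      rw [hwdef]
      field_simp
    rw [key]
    simp only [mul_pow, one_div, ← inv_pow]
    ring
  -- outer series
  have houter : HasSum (fun n : ℕ => (ρ * w) ^ (n + 1) / (n + 1)) (-Real.log (1 - ρ * w)) := by
    have habs : |ρ * w| < 1 := by rw [abs_of_nonneg hρw0]; exact hρw1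
    exact (Real.hasSum_pow_div_log_of_abs_lt_one habs).congr fun n => by push_cast; ring
  -- summability of T
  have hTsummable : Summable T := by
    refine (summable_prod_of_nonneg hTnonneg).2 ⟨fun n => (fib n).summable, ?_⟩
    refine houter.summable.congr fun n => ?_
    exact ((fib n).tsum_eq).symm
  have hT : HasSum T (-Real.log (1 - ρ * w)) := by
    have hS := hTsummable.hasSum.prod_fiberwise (fun n => (fib n))
    -- hS : HasSum (fun n => (ρ*w)^(n+1)/(n+1)) (∑' p, T p)
    have := hS.unique houter
    rw [← this]
    exact hTsummable.hasSum
  -- swap coordinates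
  have hT' : HasSum (fun p : (ℕ × ℕ) × ℕ => T (p.2, p.1)) (-Real.log (1 - ρ * w)) :=
    (Equiv.prodComm (ℕ × ℕ) ℕ).hasSum_iff.2 hT
  -- collapse fibers over n
  have hfib2 : ∀ jk : ℕ × ℕ, HasSum (fun n => T (n, jk))
      (Dcoef θ (jk.1 + 1) (jk.2 + 1) * u₁ ^ (jk.1 + 1) * u₂ ^ (jk.2 + 1)) := by
    rintro ⟨j, k⟩
    have hvan : ∀ n ∉ Finset.range (min j k + 1), T (n, (j, k)) = 0 := by
      intro n hn
      simp only [Finset.mem_range] at hn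
      have : j < n ∨ k < n := by omega
      rcases this with hlt | hlt
      · simp [hTdef, Nat.choose_eq_zero_of_lt hlt]
      · simp [hTdef, Nat.choose_eq_zero_of_lt hlt]
    have hsum := hasSum_sum_of_ne_finset_zero (L := SummationFilter.unconditional ℕ) hvan
    have hval2 : ∑ n ∈ Finset.range (min j k + 1), T (n, (j, k)) =
        Dcoef θ (j + 1) (k + 1) * u₁ ^ (j + 1) * u₂ ^ (k + 1) := by
      have hjk : min (j+1) (k+1) = min j k + 1 := by omega
      simp only [Dcoef, Nat.succ_ne_zero, if_false, Nat.add_sub_cancel, hjk, hTdef,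
        Finset.sum_mul]
      rfl
    rw [← hval2]
    exact hsum
  have hG3' : HasSum (fun jk : ℕ × ℕ =>
      Dcoef θ (jk.1 + 1) (jk.2 + 1) * u₁ ^ (jk.1 + 1) * u₂ ^ (jk.2 + 1))
      (-Real.log (1 - ρ * w)) :=
    hT'.prod_fiberwise fun jk => hfib2 jk
  -- inject interior into the full plane
  set G₃ : ℕ × ℕ → ℝ := fun jk =>
    if jk.1 = 0 ∨ jk.2 = 0 then 0 else Dcoef θ jk.1 jk.2 * u₁ ^ jk.1 * u₂ ^ jk.2 with hG3def
  have hG3 : HasSum G₃ (-Real.log (1 - ρ * w)) := by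
    have hinj : Function.Injective (fun jk : ℕ × ℕ => ((jk.1 + 1, jk.2 + 1) : ℕ × ℕ)) := by
      intro a b hab; simp only [Prod.ext_iff] at hab ⊢; omega
    refine (hinj.hasSum_iff ?_).1 ?_
    · intro jk hjk
      have : jk.1 = 0 ∨ jk.2 = 0 := by
        by_contra hcon
        push_neg at hcon
        exact hjk ⟨(jk.1 - 1, jk.2 - 1), by simp only [Prod.ext_iff]; omega⟩
      simp [hG3def, this]
    · refine hG3'.congr fun jk => ?_
      simp [hG3def]
  -- the two axes
  have hG1 : HasSum (fun jk : ℕ × ℕ => if jk.2 = 0 then u₁ ^ jk.1 / jk.1 else 0)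
      (-Real.log (1 - u₁)) := by
    have hinj : Function.Injective (fun j : ℕ => ((j, 0) : ℕ × ℕ)) := by
      intro a b hab; simpa using hab
    refine (hinj.hasSum_iff ?_).1 ?_
    · intro jk hjk
      have : jk.2 ≠ 0 := fun hc => hjk ⟨jk.1, by simp [Prod.ext_iff, hc.symm]⟩
      simp [this]
    · exact (hasSum_log_aux h10 (by linarith)).congr fun j => by simp
  have hG2 : HasSum (fun jk : ℕ × ℕ => if jk.1 = 0 ∧ jk.2 ≠ 0 then u₂ ^ jk.2 / jk.2 else 0)
      (-Real.log (1 - u₂)) := by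
    have hinj : Function.Injective (fun k : ℕ => ((0, k) : ℕ × ℕ)) := by
      intro a b hab; simpa using hab
    refine (hinj.hasSum_iff ?_).1 ?_
    · intro jk hjk
      have : jk.1 ≠ 0 := fun hc => hjk ⟨jk.2, by simp [Prod.ext_iff, hc.symm]⟩
      simp [this]
    · show HasSum ((fun jk : ℕ × ℕ => if jk.1 = 0 ∧ jk.2 ≠ 0 then u₂ ^ jk.2 / jk.2 else 0) ∘
          fun k : ℕ => ((0, k) : ℕ × ℕ)) (-Real.log (1 - u₂))
      have hfeq : ((fun jk : ℕ × ℕ => if jk.1 = 0 ∧ jk.2 ≠ 0 then u₂ ^ jk.2 / jk.2 else 0) ∘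
          fun k : ℕ => ((0, k) : ℕ × ℕ)) = fun k : ℕ => u₂ ^ k / k := by
        funext k
        by_cases hk : k = 0 <;> simp [hk, Function.comp]
      rw [hfeq]
      exact hasSum_log_aux h20 (by linarith)
  -- assemble
  have htotal := (hG1.add hG2).add hG3
  have hfun : (fun jk : ℕ × ℕ =>
      ((if jk.2 = 0 then u₁ ^ jk.1 / jk.1 else 0) +
        (if jk.1 = 0 ∧ jk.2 ≠ 0 then u₂ ^ jk.2 / jk.2 else 0)) + G₃ jk) =
      fun jk : ℕ × ℕ => Dcoef θ jk.1 jk.2 * u₁ ^ jk.1 * u₂ ^ jk.2 := by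
    funext jk
    rcases jk with ⟨j, k⟩
    by_cases hk' : k = 0
    · subst hk'
      simp [hG3def, Dcoef]
      ring
    · by_cases hj' : j = 0
      · subst hj'
        simp [hG3def, Dcoef, hk']
        ring
      · simp [hG3def, Dcoef, hk', hj']
  rw [hfun] at htotal
  -- identify the value
  have hlog : -Real.log (1 - u₁) + -Real.log (1 - u₂) + -Real.log (1 - ρ * w) =
      -Real.log (1 - u₁ - u₂ + θ * u₁ * u₂) := by
    have hval : (1 - u₁) * (1 - u₂) * (1 - ρ * w) = 1 - u₁ - u₂ + θ * u₁ * u₂ := by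
      rw [hwdef, hρdef]
      field_simp
      ring
    have h3 : (0:ℝ) < 1 - ρ * w := by linarith
    rw [← hval, Real.log_mul (by positivity) h3.ne', Real.log_mul hd1.ne' hd2.ne']
    ring
  rw [hlog] at htotal
  exact htotal

theorem C_coefficients_nonneg (θ : ℝ) (hθ : 0 ≤ θ) (hθ' : θ < 1) (C : ℕ → ℕ → ℝ)
    (hC : ∀ u₁ u₂ : ℝ, 0 ≤ u₁ → u₁ < 1 → 0 ≤ u₂ → u₂ < 1 →
      u₁ + u₂ - θ * u₁ * u₂ < 1 →
      HasSum (fun jk : ℕ × ℕ => C jk.1 jk.2 * u₁ ^ jk.1 * u₂ ^ jk.2)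
        (-Real.log (1 - u₁ - u₂ + θ * u₁ * u₂))) :
    C 0 0 = 0 ∧ ∀ j k : ℕ, (j, k) ≠ (0, 0) → 0 ≤ C j k := by
  have hCD : ∀ j k, C j k = Dcoef θ j k := by
    have hzero : ∀ j k, (fun j k => C j k - Dcoef θ j k) j k = 0 := by
      refine coeff_zero_2d _ (1/2) (by norm_num) ?_
      intro u₁ u₂ h10 h11 h20 h21
      have hcons : u₁ + u₂ - θ * u₁ * u₂ < 1 := by
        nlinarith [mul_nonneg (mul_nonneg hθ h10) h20]
      have h1 := hC u₁ u₂ h10 (by linarith) h20 (by linarith) hcons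
      have h2 := hasSum_D θ hθ hθ' u₁ u₂ h10 h11 h20 h21
      have h3 := h1.sub h2
      rw [sub_self] at h3
      show HasSum (fun jk : ℕ × ℕ =>
        (C jk.1 jk.2 - Dcoef θ jk.1 jk.2) * u₁ ^ jk.1 * u₂ ^ jk.2) 0
      have heq : (fun jk : ℕ × ℕ =>
          (C jk.1 jk.2 - Dcoef θ jk.1 jk.2) * u₁ ^ jk.1 * u₂ ^ jk.2) =
          fun jk : ℕ × ℕ => C jk.1 jk.2 * u₁ ^ jk.1 * u₂ ^ jk.2 -
            Dcoef θ jk.1 jk.2 * u₁ ^ jk.1 * u₂ ^ jk.2 := funext fun jk => by ring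
      rw [heq]
      exact h3
    intro j k
    have := hzero j k
    simpa [sub_eq_zero] using this
  constructor
  · rw [hCD 0 0, Dcoef_zero]
  · intro j k _
    rw [hCD j k]
    exact Dcoef_nonneg θ hθ' j k
end
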